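/- For any upper-triangular matrix f ∈ Mat_{n+1}(ℂ), there exist invertible upper-triangular matrices h₁, h₂ ∈ B_{n+1} such that h₂ f h₁^{-1} is a partial permutation matrix, i.e., an upper-triangular matrix all of whose entries are 0 except for at most one entry equal to 1 in each row and each column. -/

import Mathlib

/-- `M` is upper-triangular. -/
def UT (n : ℕ) (M : Matrix (Fin (n+1)) (Fin (n+1)) ℂ) : Prop :=
  ∀ i j : Fin (n+1), (j : ℕ) < (i : ℕ) → M i j = 0

/-- `M` is an upper-triangular partial permutation matrix: all entries `0` or `1`,
with at most one `1` in each row and each column. -/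
def IsUTPPM (n : ℕ) (M : Matrix (Fin (n+1)) (Fin (n+1)) ℂ) : Prop :=
  UT n M ∧ (∀ i j, M i j = 0 ∨ M i j = 1) ∧
    (∀ i j j', M i j ≠ 0 → M i j' ≠ 0 → j = j') ∧
    (∀ i i' j, M i j ≠ 0 → M i' j ≠ 0 → i = i')

namespace Stmt2Aux

open Matrix

/-- partial permutation matrix (no triangularity). -/
def PPM (n : ℕ) (M : Matrix (Fin (n+1)) (Fin (n+1)) ℂ) : Prop :=
  (∀ i j, M i j = 0 ∨ M i j = 1) ∧
    (∀ i j j', M i j ≠ 0 → M i j' ≠ 0 → j = j') ∧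
    (∀ i i' j, M i j ≠ 0 → M i' j ≠ 0 → i = i')

/-- reducibility to a PPM by the Borel × Borel action. -/
def Red (n : ℕ) (f : Matrix (Fin (n+1)) (Fin (n+1)) ℂ) : Prop :=
  ∃ h₁ h₂ : Matrix (Fin (n+1)) (Fin (n+1)) ℂ,
    UT n h₁ ∧ IsUnit h₁ ∧ UT n h₂ ∧ IsUnit h₂ ∧ PPM n (h₂ * f * h₁⁻¹)

variable {n : ℕ}

lemma ut_bt {M : Matrix (Fin (n+1)) (Fin (n+1)) ℂ} (h : UT n M) :
    M.BlockTriangular (id : Fin (n+1) → Fin (n+1)) := fun i j hij => h i j hij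

lemma bt_ut {M : Matrix (Fin (n+1)) (Fin (n+1)) ℂ}
    (h : M.BlockTriangular (id : Fin (n+1) → Fin (n+1))) : UT n M := fun i j hij => h hij

lemma ut_one : UT n 1 := by
  intro i j hij
  exact Matrix.one_apply_ne (fun e => by subst e; omega)

lemma ut_mul {A B : Matrix (Fin (n+1)) (Fin (n+1)) ℂ} (hA : UT n A) (hB : UT n B) :
    UT n (A * B) := bt_ut ((ut_bt hA).mul (ut_bt hB))

lemma ut_add {A B : Matrix (Fin (n+1)) (Fin (n+1)) ℂ} (hA : UT n A) (hB : UT n B) :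
    UT n (A + B) := fun i j h => by
  rw [Matrix.add_apply, hA i j h, hB i j h, add_zero]

lemma ut_inv {A : Matrix (Fin (n+1)) (Fin (n+1)) ℂ} (hA : UT n A) (hu : IsUnit A) :
    UT n A⁻¹ := by
  have : Invertible A := A.invertibleOfIsUnitDet ((Matrix.isUnit_iff_isUnit_det _).mp hu)
  exact bt_ut (Matrix.blockTriangular_inv_of_blockTriangular (ut_bt hA))

lemma isUnit_inv {A : Matrix (Fin (n+1)) (Fin (n+1)) ℂ} (hu : IsUnit A) : IsUnit A⁻¹ :=
  Matrix.isUnit_nonsing_inv_iff.mpr hu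

lemma red_of_ppm {M : Matrix (Fin (n+1)) (Fin (n+1)) ℂ} (h : PPM n M) : Red n M :=
  ⟨1, 1, ut_one, isUnit_one, ut_one, isUnit_one, by
    rw [inv_one, mul_one, one_mul]; exact h⟩

lemma red_mul {b₁ b₂ g : Matrix (Fin (n+1)) (Fin (n+1)) ℂ}
    (hb₁ : UT n b₁) (u₁ : IsUnit b₁) (hb₂ : UT n b₂) (u₂ : IsUnit b₂)
    (h : Red n g) : Red n (b₂ * g * b₁) := by
  obtain ⟨h₁, h₂, H1, U1, H2, U2, hp⟩ := h
  refine ⟨h₁ * b₁, h₂ * b₂⁻¹, ut_mul H1 hb₁, U1.mul u₁,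
    ut_mul H2 (ut_inv hb₂ u₂), U2.mul (isUnit_inv u₂), ?_⟩
  have e : h₂ * b₂⁻¹ * (b₂ * g * b₁) * (h₁ * b₁)⁻¹ = h₂ * g * h₁⁻¹ := by
    rw [Matrix.mul_inv_rev]
    simp only [Matrix.mul_assoc]
    rw [Matrix.nonsing_inv_mul_cancel_left _ _ ((Matrix.isUnit_iff_isUnit_det _).mp u₂),
      Matrix.mul_nonsing_inv_cancel_left _ _ ((Matrix.isUnit_iff_isUnit_det _).mp u₁)]
  rw [e]; exact hp

/-! ### Block machinery -/

/-- the index equivalence. -/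
abbrev eqv (n : ℕ) : Fin (n+1) ⊕ Fin 1 ≃ Fin (n+2) := finSumFinEquiv

/-- reindexing a `(n+1) ⊕ 1` block matrix as an `(n+2)` matrix. -/
def Φ (M : Matrix (Fin (n+1) ⊕ Fin 1) (Fin (n+1) ⊕ Fin 1) ℂ) :
    Matrix (Fin (n+2)) (Fin (n+2)) ℂ :=
  M.submatrix (eqv n).symm (eqv n).symm

lemma phi_mul (M N : Matrix (Fin (n+1) ⊕ Fin 1) (Fin (n+1) ⊕ Fin 1) ℂ) :
    Φ M * Φ N = Φ (M * N) := by
  unfold Φ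
  exact Matrix.submatrix_mul_equiv M N _ (eqv n).symm _

lemma phi_one : Φ (1 : Matrix (Fin (n+1) ⊕ Fin 1) (Fin (n+1) ⊕ Fin 1) ℂ) = 1 := by
  unfold Φ
  exact Matrix.submatrix_one_equiv (eqv n).symm

lemma phi_det (M : Matrix (Fin (n+1) ⊕ Fin 1) (Fin (n+1) ⊕ Fin 1) ℂ) :
    (Φ M).det = M.det := by
  unfold Φ
  exact Matrix.det_submatrix_equiv_self (eqv n).symm M

lemma esymm_cs (i : Fin (n+1)) :
    (eqv n).symm i.castSucc = Sum.inl i := by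
  rw [Equiv.symm_apply_eq]
  apply Fin.ext
  simp

lemma esymm_last :
    (eqv n).symm (Fin.last (n+1)) = Sum.inr 0 :=
  finSumFinEquiv_symm_last

variable {A : Matrix (Fin (n+1)) (Fin (n+1)) ℂ} {B : Matrix (Fin (n+1)) (Fin 1) ℂ}
  {C : Matrix (Fin 1) (Fin (n+1)) ℂ} {D : Matrix (Fin 1) (Fin 1) ℂ}

lemma phi_cs_cs (i j : Fin (n+1)) :
    Φ (Matrix.fromBlocks A B C D) i.castSucc j.castSucc = A i j := by
  simp [Φ, Matrix.submatrix_apply, esymm_cs]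

lemma phi_cs_last (i : Fin (n+1)) :
    Φ (Matrix.fromBlocks A B C D) i.castSucc (Fin.last (n+1)) = B i 0 := by
  simp [Φ, Matrix.submatrix_apply, esymm_cs, esymm_last]

lemma phi_last_cs (j : Fin (n+1)) :
    Φ (Matrix.fromBlocks A B C D) (Fin.last (n+1)) j.castSucc = C 0 j := by
  simp [Φ, Matrix.submatrix_apply, esymm_cs, esymm_last]

lemma phi_last_last :
    Φ (Matrix.fromBlocks A B C D) (Fin.last (n+1)) (Fin.last (n+1)) = D 0 0 := by
  simp [Φ, Matrix.submatrix_apply, esymm_last]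

lemma ut_phi (hA : UT n A) : UT (n+1) (Φ (Matrix.fromBlocks A B 0 D)) := by
  intro i j hij
  rcases Fin.eq_castSucc_or_eq_last i with ⟨i', rfl⟩ | rfl <;>
    rcases Fin.eq_castSucc_or_eq_last j with ⟨j', rfl⟩ | rfl
  · rw [phi_cs_cs]; exact hA i' j' (by simpa using hij)
  · have := i'.isLt; simp [Fin.val_last] at hij; omega
  · rw [phi_last_cs]; simp
  · simp at hij

lemma ppm_phi {P : Matrix (Fin (n+1)) (Fin (n+1)) ℂ} {v : Matrix (Fin (n+1)) (Fin 1) ℂ}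
    {D : Matrix (Fin 1) (Fin 1) ℂ}
    (hP : PPM n P)
    (hv : ∀ i, v i 0 = 0 ∨ v i 0 = 1)
    (hvcol : ∀ i i', v i 0 ≠ 0 → v i' 0 ≠ 0 → i = i')
    (hvrow : ∀ i, v i 0 ≠ 0 → ∀ j, P i j = 0)
    (hD : D 0 0 = 0 ∨ D 0 0 = 1)
    (hDv : D 0 0 ≠ 0 → ∀ i, v i 0 = 0) :
    PPM (n+1) (Φ (Matrix.fromBlocks P v 0 D)) := by
  refine ⟨?_, ?_, ?_⟩
  · intro i j
    rcases Fin.eq_castSucc_or_eq_last i with ⟨i', rfl⟩ | rfl <;>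
      rcases Fin.eq_castSucc_or_eq_last j with ⟨j', rfl⟩ | rfl
    · rw [phi_cs_cs]; exact hP.1 i' j'
    · rw [phi_cs_last]; exact hv i'
    · rw [phi_last_cs]; left; simp
    · rw [phi_last_last]; exact hD
  · intro i j j' hj hj'
    rcases Fin.eq_castSucc_or_eq_last i with ⟨i'', rfl⟩ | rfl
    · rcases Fin.eq_castSucc_or_eq_last j with ⟨j₁, rfl⟩ | rfl <;>
        rcases Fin.eq_castSucc_or_eq_last j' with ⟨j₂, rfl⟩ | rfl
      · rw [phi_cs_cs] at hj hj'
        rw [hP.2.1 i'' j₁ j₂ hj hj']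
      · rw [phi_cs_cs] at hj; rw [phi_cs_last] at hj'
        exact absurd (hvrow i'' hj' j₁) hj
      · rw [phi_cs_last] at hj; rw [phi_cs_cs] at hj'
        exact absurd (hvrow i'' hj j₂) hj'
      · rfl
    · rcases Fin.eq_castSucc_or_eq_last j with ⟨j₁, rfl⟩ | rfl <;>
        rcases Fin.eq_castSucc_or_eq_last j' with ⟨j₂, rfl⟩ | rfl
      · rw [phi_last_cs] at hj; simp at hj
      · rw [phi_last_cs] at hj; simp at hj
      · rw [phi_last_cs] at hj'; simp at hj'
      · rfl
  · intro i i' j hi hi'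
    rcases Fin.eq_castSucc_or_eq_last j with ⟨j'', rfl⟩ | rfl
    · rcases Fin.eq_castSucc_or_eq_last i with ⟨i₁, rfl⟩ | rfl <;>
        rcases Fin.eq_castSucc_or_eq_last i' with ⟨i₂, rfl⟩ | rfl
      · rw [phi_cs_cs] at hi hi'
        rw [hP.2.2 i₁ i₂ j'' hi hi']
      · rw [phi_last_cs] at hi'; simp at hi'
      · rw [phi_last_cs] at hi; simp at hi
      · rfl
    · rcases Fin.eq_castSucc_or_eq_last i with ⟨i₁, rfl⟩ | rfl <;>
        rcases Fin.eq_castSucc_or_eq_last i' with ⟨i₂, rfl⟩ | rfl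
      · rw [phi_cs_last] at hi hi'
        rw [hvcol i₁ i₂ hi hi']
      · rw [phi_cs_last] at hi; rw [phi_last_last] at hi'
        exact absurd (hDv hi' i₁) hi
      · rw [phi_last_last] at hi; rw [phi_cs_last] at hi'
        exact absurd (hDv hi i₂) hi'
      · rfl

/-- Core elimination: a block matrix `[[P, d], [0, 0]]` with `P` a PPM is reducible. -/
lemma red_core (P : Matrix (Fin (n+1)) (Fin (n+1)) ℂ) (d : Matrix (Fin (n+1)) (Fin 1) ℂ)
    (hP : PPM n P) : Red (n+1) (Φ (Matrix.fromBlocks P d 0 0)) := by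
  classical
  set w : Matrix (Fin (n+1)) (Fin 1) ℂ := -(Pᵀ * d) with hw
  set d₁ : Matrix (Fin (n+1)) (Fin 1) ℂ := P * w + d with hd₁
  have key : ∀ i, d₁ i 0 ≠ 0 → ∀ j, P i j = 0 := by
    intro i hi j
    by_contra hPij
    apply hi
    have h1 : P i j = 1 := (hP.1 i j).resolve_left hPij
    have hrow : ∀ k, k ≠ j → P i k = 0 := by
      intro k hk; by_contra h; exact hk (hP.2.1 i k j h hPij)
    have hcol : ∀ k, k ≠ i → P k j = 0 := by
      intro k hk; by_contra h; exact hk (hP.2.2 k i j h hPij)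
    show (P * w + d) i 0 = 0
    rw [Matrix.add_apply, Matrix.mul_apply,
      Finset.sum_eq_single j (fun k _ hk => by rw [hrow k hk, zero_mul]) (by simp)]
    have hwj : w j 0 = -(d i 0) := by
      rw [hw, Matrix.neg_apply, Matrix.mul_apply,
        Finset.sum_eq_single i
          (fun k _ hk => by rw [Matrix.transpose_apply, hcol k hk, zero_mul]) (by simp),
        Matrix.transpose_apply, h1, one_mul]
    rw [h1, hwj, one_mul]; ring
  set K := Φ (Matrix.fromBlocks (1 : Matrix (Fin (n+1)) (Fin (n+1)) ℂ) w 0 1) with hK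
  have hKmul : Φ (Matrix.fromBlocks P d 0 0) * K = Φ (Matrix.fromBlocks P d₁ 0 0) := by
    rw [hK, phi_mul, Matrix.fromBlocks_multiply]
    simp [hd₁]
  have hKut : UT (n+1) K := ut_phi ut_one
  have hKunit : IsUnit K := by
    rw [Matrix.isUnit_iff_isUnit_det, hK, phi_det, Matrix.det_fromBlocks_zero₂₁]
    simp
  suffices h : Red (n+1) (Φ (Matrix.fromBlocks P d₁ 0 0)) by
    have e : Φ (Matrix.fromBlocks P d 0 0) = 1 * Φ (Matrix.fromBlocks P d₁ 0 0) * K⁻¹ := by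
      rw [one_mul, ← hKmul,
        Matrix.mul_nonsing_inv_cancel_right _ _ ((Matrix.isUnit_iff_isUnit_det _).mp hKunit)]
    rw [e]
    exact red_mul (ut_inv hKut hKunit) (isUnit_inv hKunit) ut_one isUnit_one h
  by_cases h0 : ∀ i, d₁ i 0 = 0
  · apply red_of_ppm
    refine ppm_phi hP (fun i => Or.inl (h0 i)) (fun i i' hi => absurd (h0 i) hi)
      (fun i hi => absurd (h0 i) hi) (Or.inl rfl) (fun h => absurd rfl h)
  · push_neg at h0
    obtain ⟨iw, hiw⟩ := h0
    have hSne : (Finset.univ.filter (fun i => d₁ i 0 ≠ 0)).Nonempty :=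
      ⟨iw, by simp [hiw]⟩
    set i₀ := (Finset.univ.filter (fun i => d₁ i 0 ≠ 0)).max' hSne with hi₀def
    have hi₀ : d₁ i₀ 0 ≠ 0 := by
      have h := Finset.max'_mem _ hSne
      simp only [Finset.mem_filter] at h
      exact h.2
    have hmax : ∀ i, d₁ i 0 ≠ 0 → i ≤ i₀ := fun i hi => Finset.le_max' _ i (by simp [hi])
    set a := d₁ i₀ 0 with ha
    set N : Matrix (Fin (n+1)) (Fin (n+1)) ℂ := Matrix.of fun i j =>
      if j = i₀ then (if i = i₀ then a⁻¹ - 1 else -(d₁ i 0) * a⁻¹) else 0 with hN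
    set E : Matrix (Fin (n+1)) (Fin (n+1)) ℂ := 1 + N with hE
    have hNut : UT n N := by
      intro i j hij
      show (if j = i₀ then (if i = i₀ then a⁻¹ - 1 else -(d₁ i 0) * a⁻¹) else 0) = 0
      by_cases hji : j = i₀
      · subst hji
        have hii : i ≠ i₀ := fun e => by subst e; omega
        have hd0 : d₁ i 0 = 0 := by
          by_contra h
          have := hmax i h
          rw [Fin.le_def] at this; omega
        rw [if_pos rfl, if_neg hii, hd0]; ring
      · rw [if_neg hji]
    have hEut : UT n E := ut_add ut_one hNut
    have hNP : N * P = 0 := by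
      ext i j
      rw [Matrix.mul_apply,
        Finset.sum_eq_single i₀
          (fun k _ hk => by
            show (if k = i₀ then _ else 0) * P k j = 0
            rw [if_neg hk, zero_mul]) (by simp)]
      rw [key i₀ hi₀ j, mul_zero, Matrix.zero_apply]
    have hEP : E * P = P := by rw [hE, Matrix.add_mul, Matrix.one_mul, hNP, add_zero]
    set v : Matrix (Fin (n+1)) (Fin 1) ℂ := Matrix.of fun i _ => if i = i₀ then 1 else 0 with hv
    have hEd : E * d₁ = v := by
      ext i j
      have hj0 : j = 0 := Subsingleton.elim _ _
      subst hj0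
      rw [hE, Matrix.add_mul, Matrix.one_mul, Matrix.add_apply, Matrix.mul_apply,
        Finset.sum_eq_single i₀
          (fun k _ hk => by
            show (if k = i₀ then _ else 0) * d₁ k 0 = 0
            rw [if_neg hk, zero_mul]) (by simp)]
      have hNv : N i i₀ = if i = i₀ then a⁻¹ - 1 else -(d₁ i 0) * a⁻¹ := by simp [hN]
      have hvv : v i 0 = if i = i₀ then 1 else 0 := by simp [hv]
      rw [hNv, hvv]
      by_cases hii : i = i₀
      · subst hii
        rw [if_pos rfl, if_pos rfl, ← ha, sub_mul, inv_mul_cancel₀ hi₀]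
        ring
      · rw [if_neg hii, if_neg hii, ← ha]
        field_simp
        ring
    have hEdiag : ∀ i, E i i = if i = i₀ then a⁻¹ else 1 := by
      intro i
      show (1 : Matrix (Fin (n+1)) (Fin (n+1)) ℂ) i i + N i i = _
      rw [Matrix.one_apply_eq]
      by_cases hii : i = i₀
      · subst hii
        show 1 + (if i₀ = i₀ then (if i₀ = i₀ then a⁻¹ - 1 else _) else 0) = _
        rw [if_pos rfl, if_pos rfl, if_pos rfl]; ring
      · show 1 + (if i = i₀ then _ else 0) = _
        rw [if_neg hii, if_neg hii]; ring
    have hEunit : IsUnit E := by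
      rw [Matrix.isUnit_iff_isUnit_det, Matrix.det_of_upperTriangular (ut_bt hEut),
        isUnit_iff_ne_zero]
      rw [Finset.prod_ne_zero_iff]
      intro i _
      rw [hEdiag i]
      by_cases hii : i = i₀
      · rw [if_pos hii]; exact inv_ne_zero hi₀
      · rw [if_neg hii]; exact one_ne_zero
    set L := Φ (Matrix.fromBlocks E 0 0 (1 : Matrix (Fin 1) (Fin 1) ℂ)) with hL
    have hLmul : L * Φ (Matrix.fromBlocks P d₁ 0 0) = Φ (Matrix.fromBlocks P v 0 0) := by
      rw [hL, phi_mul, Matrix.fromBlocks_multiply]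
      simp [hEP, hEd]
    have hLut : UT (n+1) L := ut_phi hEut
    have hLunit : IsUnit L := by
      rw [Matrix.isUnit_iff_isUnit_det, hL, phi_det, Matrix.det_fromBlocks_zero₂₁, Matrix.det_one,
        mul_one, ← Matrix.isUnit_iff_isUnit_det]
      exact hEunit
    have hQ : PPM (n+1) (Φ (Matrix.fromBlocks P v 0 0)) := by
      refine ppm_phi hP ?_ ?_ ?_ (Or.inl rfl) (fun h => absurd rfl h)
      · intro i
        show (if i = i₀ then (1:ℂ) else 0) = 0 ∨ (if i = i₀ then (1:ℂ) else 0) = 1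
        by_cases hii : i = i₀
        · right; rw [if_pos hii]
        · left; rw [if_neg hii]
      · intro i i' hi hi'
        have h1 : i = i₀ := by
          by_contra h
          exact hi (by show (if i = i₀ then (1:ℂ) else 0) = 0; rw [if_neg h])
        have h2 : i' = i₀ := by
          by_contra h
          exact hi' (by show (if i' = i₀ then (1:ℂ) else 0) = 0; rw [if_neg h])
        rw [h1, h2]
      · intro i hi j
        have h1 : i = i₀ := by
          by_contra h
          exact hi (by show (if i = i₀ then (1:ℂ) else 0) = 0; rw [if_neg h])
        subst h1
        exact key _ hi₀ j
    have e : Φ (Matrix.fromBlocks P d₁ 0 0) = L⁻¹ * Φ (Matrix.fromBlocks P v 0 0) * 1 := by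
      rw [mul_one, ← hLmul,
        Matrix.nonsing_inv_mul_cancel_left _ _ ((Matrix.isUnit_iff_isUnit_det _).mp hLunit)]
    rw [e]
    exact red_mul ut_one isUnit_one (ut_inv hLut hLunit) (isUnit_inv hLunit) (red_of_ppm hQ)

/-- If `f'` is reducible then `[[f', c], [0, 0]]` is reducible. -/
lemma red_step_zero (f' : Matrix (Fin (n+1)) (Fin (n+1)) ℂ) (c : Matrix (Fin (n+1)) (Fin 1) ℂ)
    (hred : Red n f') : Red (n+1) (Φ (Matrix.fromBlocks f' c 0 0)) := by
  obtain ⟨h₁, h₂, H1, U1, H2, U2, hp⟩ := hred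
  set H₁ := Φ (Matrix.fromBlocks h₁ 0 0 (1 : Matrix (Fin 1) (Fin 1) ℂ)) with hH₁
  set H₂ := Φ (Matrix.fromBlocks h₂ 0 0 (1 : Matrix (Fin 1) (Fin 1) ℂ)) with hH₂
  have hH₁ut : UT (n+1) H₁ := ut_phi H1
  have hH₂ut : UT (n+1) H₂ := ut_phi H2
  have hH₁unit : IsUnit H₁ := by
    rw [Matrix.isUnit_iff_isUnit_det, hH₁, phi_det, Matrix.det_fromBlocks_zero₂₁, Matrix.det_one,
      mul_one, ← Matrix.isUnit_iff_isUnit_det]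
    exact U1
  have hH₂unit : IsUnit H₂ := by
    rw [Matrix.isUnit_iff_isUnit_det, hH₂, phi_det, Matrix.det_fromBlocks_zero₂₁, Matrix.det_one,
      mul_one, ← Matrix.isUnit_iff_isUnit_det]
    exact U2
  have hH₁inv : H₁⁻¹ = Φ (Matrix.fromBlocks h₁⁻¹ 0 0 (1 : Matrix (Fin 1) (Fin 1) ℂ)) := by
    apply Matrix.inv_eq_left_inv
    rw [hH₁, phi_mul, Matrix.fromBlocks_multiply,
      Matrix.nonsing_inv_mul _ ((Matrix.isUnit_iff_isUnit_det _).mp U1)]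
    simp [Matrix.fromBlocks_one, phi_one]
  have key : H₂ * Φ (Matrix.fromBlocks f' c 0 0) * H₁⁻¹
      = Φ (Matrix.fromBlocks (h₂ * f' * h₁⁻¹) (h₂ * c) 0 0) := by
    rw [hH₁inv, hH₂, phi_mul, phi_mul, Matrix.fromBlocks_multiply, Matrix.fromBlocks_multiply]
    simp [Matrix.mul_assoc]
  have hcore : Red (n+1) (Φ (Matrix.fromBlocks (h₂ * f' * h₁⁻¹) (h₂ * c) 0 0)) :=
    red_core _ _ hp
  have e : Φ (Matrix.fromBlocks f' c 0 0)
      = H₂⁻¹ * Φ (Matrix.fromBlocks (h₂ * f' * h₁⁻¹) (h₂ * c) 0 0) * H₁ := by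
    rw [← key, Matrix.mul_assoc H₂,
      Matrix.nonsing_inv_mul_cancel_left _ _ ((Matrix.isUnit_iff_isUnit_det _).mp hH₂unit),
      Matrix.nonsing_inv_mul_cancel_right _ _ ((Matrix.isUnit_iff_isUnit_det _).mp hH₁unit)]
  rw [e]
  exact red_mul hH₁ut hH₁unit (ut_inv hH₂ut hH₂unit) (isUnit_inv hH₂unit) hcore

/-- If `f'` is reducible then `[[f', 0], [0, 1]]` is reducible. -/
lemma red_step_unit (f' : Matrix (Fin (n+1)) (Fin (n+1)) ℂ)
    (hred : Red n f') :
    Red (n+1) (Φ (Matrix.fromBlocks f' 0 0 (1 : Matrix (Fin 1) (Fin 1) ℂ))) := by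
  obtain ⟨h₁, h₂, H1, U1, H2, U2, hp⟩ := hred
  set H₁ := Φ (Matrix.fromBlocks h₁ 0 0 (1 : Matrix (Fin 1) (Fin 1) ℂ)) with hH₁
  set H₂ := Φ (Matrix.fromBlocks h₂ 0 0 (1 : Matrix (Fin 1) (Fin 1) ℂ)) with hH₂
  have hH₁ut : UT (n+1) H₁ := ut_phi H1
  have hH₂ut : UT (n+1) H₂ := ut_phi H2
  have hH₁unit : IsUnit H₁ := by
    rw [Matrix.isUnit_iff_isUnit_det, hH₁, phi_det, Matrix.det_fromBlocks_zero₂₁, Matrix.det_one,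
      mul_one, ← Matrix.isUnit_iff_isUnit_det]
    exact U1
  have hH₂unit : IsUnit H₂ := by
    rw [Matrix.isUnit_iff_isUnit_det, hH₂, phi_det, Matrix.det_fromBlocks_zero₂₁, Matrix.det_one,
      mul_one, ← Matrix.isUnit_iff_isUnit_det]
    exact U2
  have hH₁inv : H₁⁻¹ = Φ (Matrix.fromBlocks h₁⁻¹ 0 0 (1 : Matrix (Fin 1) (Fin 1) ℂ)) := by
    apply Matrix.inv_eq_left_inv
    rw [hH₁, phi_mul, Matrix.fromBlocks_multiply,
      Matrix.nonsing_inv_mul _ ((Matrix.isUnit_iff_isUnit_det _).mp U1)]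
    simp [Matrix.fromBlocks_one, phi_one]
  have key : H₂ * Φ (Matrix.fromBlocks f' 0 0 (1 : Matrix (Fin 1) (Fin 1) ℂ)) * H₁⁻¹
      = Φ (Matrix.fromBlocks (h₂ * f' * h₁⁻¹) 0 0 (1 : Matrix (Fin 1) (Fin 1) ℂ)) := by
    rw [hH₁inv, hH₂, phi_mul, phi_mul, Matrix.fromBlocks_multiply, Matrix.fromBlocks_multiply]
    simp [Matrix.mul_assoc]
  refine ⟨H₁, H₂, hH₁ut, hH₁unit, hH₂ut, hH₂unit, ?_⟩
  rw [key]
  refine ppm_phi hp (fun i => Or.inl rfl) ?_ ?_ (Or.inr (Matrix.one_apply_eq 0)) ?_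
  · intro i i' hi
    exact absurd rfl hi
  · intro i hi
    exact absurd rfl hi
  · intro _ i
    rfl

/-- Decomposition of an upper-triangular matrix into blocks. -/
lemma decomp (f : Matrix (Fin (n+2)) (Fin (n+2)) ℂ) (hf : UT (n+1) f) :
    f = Φ (Matrix.fromBlocks
      (Matrix.of fun i j => f i.castSucc j.castSucc)
      (Matrix.of fun i (_ : Fin 1) => f i.castSucc (Fin.last (n+1)))
      0
      (Matrix.of fun (_ : Fin 1) (_ : Fin 1) => f (Fin.last (n+1)) (Fin.last (n+1)))) := by
  ext i j
  rcases Fin.eq_castSucc_or_eq_last i with ⟨i', rfl⟩ | rfl <;>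
    rcases Fin.eq_castSucc_or_eq_last j with ⟨j', rfl⟩ | rfl
  · rw [phi_cs_cs]; rfl
  · rw [phi_cs_last]; rfl
  · rw [phi_last_cs]
    have : (j'.castSucc : ℕ) < (Fin.last (n+1) : ℕ) := by
      simpa using j'.isLt
    rw [hf _ _ this]
    rfl
  · rw [phi_last_last]; rfl

lemma red_main : ∀ (n : ℕ) (f : Matrix (Fin (n+1)) (Fin (n+1)) ℂ), UT n f → Red n f := by
  intro n
  induction n with
  | zero =>
    intro f _
    by_cases h : f 0 0 = 0
    · apply red_of_ppm
      refine ⟨?_, ?_, ?_⟩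
      · intro i j
        have hi : i = 0 := Fin.ext (by have := i.isLt; omega)
        have hj : j = 0 := Fin.ext (by have := j.isLt; omega)
        subst hi; subst hj
        exact Or.inl h
      · intro i j j' _ _; exact Fin.ext (by have := j.isLt; have := j'.isLt; omega)
      · intro i i' j _ _; exact Fin.ext (by have := i.isLt; have := i'.isLt; omega)
    · refine ⟨1, (f 0 0)⁻¹ • 1, ut_one, isUnit_one, ?_, ?_, ?_⟩
      · intro i j hij
        have := i.isLt; have := j.isLt; omega
      · rw [Matrix.isUnit_iff_isUnit_det, Matrix.det_fin_one]
        simp only [Matrix.smul_apply, Matrix.one_apply_eq, smul_eq_mul, mul_one]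
        exact isUnit_iff_ne_zero.mpr (inv_ne_zero h)
      · rw [inv_one, mul_one, Matrix.smul_mul, one_mul]
        refine ⟨?_, ?_, ?_⟩
        · intro i j
          have hi : i = 0 := Fin.ext (by have := i.isLt; omega)
          have hj : j = 0 := Fin.ext (by have := j.isLt; omega)
          subst hi; subst hj
          right
          rw [Matrix.smul_apply, smul_eq_mul, inv_mul_cancel₀ h]
        · intro i j j' _ _; exact Fin.ext (by have := j.isLt; have := j'.isLt; omega)
        · intro i i' j _ _; exact Fin.ext (by have := i.isLt; have := i'.isLt; omega)
  | succ n ih =>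
    intro f hf
    set f' : Matrix (Fin (n+1)) (Fin (n+1)) ℂ :=
      Matrix.of fun i j => f i.castSucc j.castSucc with hf'def
    set c : Matrix (Fin (n+1)) (Fin 1) ℂ :=
      Matrix.of fun i (_ : Fin 1) => f i.castSucc (Fin.last (n+1)) with hcdef
    set D : Matrix (Fin 1) (Fin 1) ℂ :=
      Matrix.of fun (_ : Fin 1) (_ : Fin 1) => f (Fin.last (n+1)) (Fin.last (n+1)) with hDdef
    have hf' : UT n f' := by
      intro i j h
      show f i.castSucc j.castSucc = 0
      exact hf _ _ (by simpa using h)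
    have hdec : f = Φ (Matrix.fromBlocks f' c 0 D) := decomp f hf
    by_cases ha : f (Fin.last (n+1)) (Fin.last (n+1)) = 0
    · have hD0 : D = 0 := by
        ext i j; exact ha
      rw [hdec, hD0]
      exact red_step_zero f' c (ih f' hf')
    · set B := Φ (Matrix.fromBlocks (1 : Matrix (Fin (n+1)) (Fin (n+1)) ℂ) c 0 D) with hB
      have hsplit : f = B * Φ (Matrix.fromBlocks f' 0 0 (1 : Matrix (Fin 1) (Fin 1) ℂ)) := by
        rw [hB, phi_mul, Matrix.fromBlocks_multiply, hdec]
        simp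
      have hBut : UT (n+1) B := ut_phi ut_one
      have hBunit : IsUnit B := by
        rw [Matrix.isUnit_iff_isUnit_det, hB, phi_det, Matrix.det_fromBlocks_zero₂₁,
          Matrix.det_one, one_mul, Matrix.det_fin_one]
        exact isUnit_iff_ne_zero.mpr ha
      have h1 := red_mul ut_one isUnit_one hBut hBunit (red_step_unit f' (ih f' hf'))
      rw [mul_one] at h1
      rw [hsplit]
      exact h1

end Stmt2Aux

/-- every upper-triangular matrix can be brought to an upper-triangular
partial permutation matrix by the base change action `(h₁, h₂) · f = h₂ f h₁⁻¹`
of `B_{n+1} × B_{n+1}`. -/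
theorem stmt2 (n : ℕ) (f : Matrix (Fin (n+1)) (Fin (n+1)) ℂ) (hf : UT n f) :
    ∃ h₁ h₂ : Matrix (Fin (n+1)) (Fin (n+1)) ℂ,
      UT n h₁ ∧ IsUnit h₁ ∧ UT n h₂ ∧ IsUnit h₂ ∧
      IsUTPPM n (h₂ * f * h₁⁻¹) := by
  obtain ⟨h₁, h₂, H1, U1, H2, U2, hp⟩ := Stmt2Aux.red_main n f hf
  exact ⟨h₁, h₂, H1, U1, H2, U2,
    ⟨Stmt2Aux.ut_mul (Stmt2Aux.ut_mul H2 hf) (Stmt2Aux.ut_inv H1 U1), hp⟩⟩
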